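/- For every n ≥ 1 and t < 0, the Hankel determinant D_n satisfies t·(d/dt) ln D_n(t) = n(n+α+β+γ) − Σ_{j=0}^{n−1} R_j(t). -/

import Mathlib

open MeasureTheory Real

/-- The generalized Jacobi weight `w(x;t) = (x-t)^γ x^α (1-x)^β`. -/
noncomputable def genJacobiWeight (α β γ t x : ℝ) : ℝ :=
  (x - t) ^ γ * x ^ α * (1 - x) ^ β

/-- The Hankel determinant `D_n(t)` of the moments of the generalized Jacobi weight. -/
noncomputable def hankelDet (α β γ : ℝ) (n : ℕ) (t : ℝ) : ℝ :=
  Matrix.det (Matrix.of fun j k : Fin n =>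
    ∫ x in (0:ℝ)..1, x ^ ((j : ℕ) + (k : ℕ)) * genJacobiWeight α β γ t x)


set_option linter.unusedSectionVars false
namespace S16
open Matrix

lemma uIcc01 : Set.uIcc (0:ℝ) 1 = Set.Icc 0 1 := Set.uIcc_of_le zero_le_one

lemma contOn_rpow_pos {p : ℝ} (hp : 0 ≤ p) : ContinuousOn (fun x : ℝ => x ^ p) (Set.Icc 0 1) :=
  fun x _ => (Real.continuousAt_rpow_const x p (Or.inr hp)).continuousWithinAt

lemma contOn_one_sub_rpow {p : ℝ} (hp : 0 ≤ p) :
    ContinuousOn (fun x : ℝ => (1 - x) ^ p) (Set.Icc 0 1) := by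
  intro x _
  apply ContinuousAt.continuousWithinAt
  exact ContinuousAt.rpow_const (by fun_prop) (Or.inr hp)

lemma contOn_shift {t : ℝ} (ht : t < 0) (p : ℝ) :
    ContinuousOn (fun x : ℝ => (x - t) ^ p) (Set.Icc 0 1) := by
  intro x hx
  have hne : x - t ≠ 0 := by have := hx.1; intro hc; linarith [sub_eq_zero.mp hc]
  apply ContinuousAt.continuousWithinAt
  exact ContinuousAt.rpow_const (by fun_prop) (Or.inl hne)

lemma II_of_contOn {f : ℝ → ℝ} (hf : ContinuousOn f (Set.Icc 0 1)) :
    IntervalIntegrable f volume 0 1 :=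
  (uIcc01 ▸ hf).intervalIntegrable

lemma II_congr {f g : ℝ → ℝ} (e : ∀ x, f x = g x) (hf : IntervalIntegrable f volume 0 1) :
    IntervalIntegrable g volume 0 1 := (funext e : f = g) ▸ hf

lemma II_sing {e3 : ℝ} (h3 : -1 < e3) {g : ℝ → ℝ} (hg : ContinuousOn g (Set.Icc 0 1)) :
    IntervalIntegrable (fun x => g x * (1 - x) ^ e3) volume 0 1 := by
  have h0 : IntervalIntegrable (fun x : ℝ => (1 - x) ^ e3) volume 0 1 := by
    simpa using (intervalIntegral.intervalIntegrable_rpow' (a := (1:ℝ)) (b := (0:ℝ)) h3).comp_sub_left 1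
  exact h0.continuousOn_mul (uIcc01 ▸ hg)

lemma contOn_w {α β γ t : ℝ} (ht : t < 0) (hα : 0 < α) (hβ : 0 < β) :
    ContinuousOn (fun x => genJacobiWeight α β γ t x) (Set.Icc 0 1) := by
  unfold genJacobiWeight
  exact ((contOn_shift ht γ).mul (contOn_rpow_pos hα.le)).mul (contOn_one_sub_rpow hβ.le)

lemma contOn_gw {t : ℝ} (ht : t < 0) (e1 : ℝ) {e2 : ℝ} (h2 : 0 ≤ e2) {e3 : ℝ} (h3 : 0 ≤ e3) :
    ContinuousOn (fun x : ℝ => (x - t) ^ e1 * x ^ e2 * (1 - x) ^ e3) (Set.Icc 0 1) :=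
  ((contOn_shift ht e1).mul (contOn_rpow_pos h2)).mul (contOn_one_sub_rpow h3)

lemma II_PPw {α β γ t : ℝ} (ht : t < 0) (hα : 0 < α) (hβ : 0 < β) (p q : Polynomial ℝ) :
    IntervalIntegrable
      (fun x => Polynomial.eval x p * Polynomial.eval x q * genJacobiWeight α β γ t x)
      volume 0 1 :=
  II_of_contOn (((p.continuous.continuousOn).mul (q.continuous.continuousOn)).mul
    (contOn_w ht hα hβ))

lemma one_sub_split (β : ℝ) (hβ : 0 < β) (x : ℝ) :
    (1-x) ^ β = (1-x) ^ (β-1) * (1-x) := by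
  rcases eq_or_ne x 1 with rfl | hx
  · simp [Real.zero_rpow hβ.ne']
  · have h1x : (1:ℝ) - x ≠ 0 := sub_ne_zero.mpr (fun hc => hx hc.symm)
    have := Real.rpow_add_one h1x (β-1)
    rwa [sub_add_cancel] at this

section Ortho

variable {α β γ t : ℝ} (ht : t < 0) (hα : 0 < α) (hβ : 0 < β)
  {P : ℕ → Polynomial ℝ} {h : ℕ → ℝ}
  (hmono : ∀ n, (P n).Monic ∧ (P n).natDegree = n)
  (horth : ∀ m n, (∫ x in (0:ℝ)..1,
      (P m).eval x * (P n).eval x * genJacobiWeight α β γ t x) = if m = n then h n else 0)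

include ht hα hβ hmono horth

lemma ortho_lower : ∀ m : ℕ, ∀ q : Polynomial ℝ, q.degree < (m : ℕ) → ∀ k, m ≤ k →
    (∫ x in (0:ℝ)..1, q.eval x * (P k).eval x * genJacobiWeight α β γ t x) = 0 := by
  intro m
  induction m with
  | zero =>
    intro q hq k _
    have hq0 : q = 0 := by
      rw [← Polynomial.degree_eq_bot]
      simpa [Nat.WithBot.lt_zero_iff] using hq
    simp [hq0]
  | succ m ih =>
    intro q hq k hk
    set c := q.coeff m with hc
    set r := q - Polynomial.C c * P m with hrdef
    have hPm := hmono m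
    have hrd : r.degree < (m : ℕ) := by
      rw [Polynomial.degree_lt_iff_coeff_zero]
      intro i hi
      have hco : (P m).coeff m = 1 := by
        have := hPm.1.coeff_natDegree
        rwa [hPm.2] at this
      rcases eq_or_lt_of_le hi with hEq | hlt
      · subst hEq
        simp [hrdef, Polynomial.coeff_sub, Polynomial.coeff_C_mul, hco, hc]
      · have h1 : q.coeff i = 0 :=
          (Polynomial.degree_lt_iff_coeff_zero q (m+1)).1 hq i (by omega)
        have h2 : (P m).coeff i = 0 :=
          Polynomial.coeff_eq_zero_of_natDegree_lt (by rw [hPm.2]; exact hlt)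
        simp [hrdef, Polynomial.coeff_sub, Polynomial.coeff_C_mul, h1, h2]
    have hsplit : ∀ x : ℝ, q.eval x * (P k).eval x * genJacobiWeight α β γ t x
        = c * ((P m).eval x * (P k).eval x * genJacobiWeight α β γ t x)
          + r.eval x * (P k).eval x * genJacobiWeight α β γ t x := by
      intro x
      have hqeq : q = Polynomial.C c * P m + r := by rw [hrdef]; ring
      rw [hqeq]
      simp only [Polynomial.eval_add, Polynomial.eval_mul, Polynomial.eval_C]
      ring
    have i1 : IntervalIntegrable
        (fun x => c * ((P m).eval x * (P k).eval x * genJacobiWeight α β γ t x)) volume 0 1 :=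
      (II_PPw ht hα hβ (P m) (P k)).const_mul c
    have i2 : IntervalIntegrable
        (fun x => r.eval x * (P k).eval x * genJacobiWeight α β γ t x) volume 0 1 :=
      II_PPw ht hα hβ r (P k)
    rw [intervalIntegral.integral_congr (fun x _ => hsplit x),
      intervalIntegral.integral_add i1 i2, intervalIntegral.integral_const_mul,
      horth m k, ih r hrd k (by omega)]
    have : m ≠ k := by omega
    simp [this]

lemma proj_coeff : ∀ j : ℕ, ∀ q : Polynomial ℝ, q.degree < ((j : ℕ) + 1 : ℕ) →
    (∫ x in (0:ℝ)..1, q.eval x * (P j).eval x * genJacobiWeight α β γ t x)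
      = q.coeff j * h j := by
  intro j q hq
  set c := q.coeff j with hc
  set r := q - Polynomial.C c * P j with hrdef
  have hPj := hmono j
  have hrd : r.degree < (j : ℕ) := by
    rw [Polynomial.degree_lt_iff_coeff_zero]
    intro i hi
    have hco : (P j).coeff j = 1 := by
      have := hPj.1.coeff_natDegree
      rwa [hPj.2] at this
    rcases eq_or_lt_of_le hi with hEq | hlt
    · subst hEq
      simp [hrdef, Polynomial.coeff_sub, Polynomial.coeff_C_mul, hco, hc]
    · have h1 : q.coeff i = 0 :=
        (Polynomial.degree_lt_iff_coeff_zero q (j+1)).1 hq i (by omega)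
      have h2 : (P j).coeff i = 0 :=
        Polynomial.coeff_eq_zero_of_natDegree_lt (by rw [hPj.2]; exact hlt)
      simp [hrdef, Polynomial.coeff_sub, Polynomial.coeff_C_mul, h1, h2]
  have hsplit : ∀ x : ℝ, q.eval x * (P j).eval x * genJacobiWeight α β γ t x
      = c * ((P j).eval x * (P j).eval x * genJacobiWeight α β γ t x)
        + r.eval x * (P j).eval x * genJacobiWeight α β γ t x := by
    intro x
    have hqeq : q = Polynomial.C c * P j + r := by rw [hrdef]; ring
    rw [hqeq]
    simp only [Polynomial.eval_add, Polynomial.eval_mul, Polynomial.eval_C]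
    ring
  have i1 : IntervalIntegrable
      (fun x => c * ((P j).eval x * (P j).eval x * genJacobiWeight α β γ t x)) volume 0 1 :=
    (II_PPw ht hα hβ (P j) (P j)).const_mul c
  have i2 : IntervalIntegrable
      (fun x => r.eval x * (P j).eval x * genJacobiWeight α β γ t x) volume 0 1 :=
    II_PPw ht hα hβ r (P j)
  rw [intervalIntegral.integral_congr (fun x _ => hsplit x),
    intervalIntegral.integral_add i1 i2, intervalIntegral.integral_const_mul,
    horth j j, ortho_lower ht hα hβ hmono horth j r hrd j le_rfl]
  simp

lemma integral_sq_w (j : ℕ) :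
    (∫ x in (0:ℝ)..1, x ^ α * (1-x) ^ β * (x-t) ^ γ * (Polynomial.eval x (P j))^2) = h j := by
  have hcongr : ∀ x ∈ Set.uIcc (0:ℝ) 1,
      x ^ α * (1-x) ^ β * (x-t) ^ γ * (Polynomial.eval x (P j))^2
        = Polynomial.eval x (P j) * Polynomial.eval x (P j) * genJacobiWeight α β γ t x := by
    intro x _
    unfold genJacobiWeight
    ring
  rw [intervalIntegral.integral_congr hcongr, horth j j, if_pos rfl]

lemma sum_xPP' (j : ℕ) :
    (∫ x in (0:ℝ)..1, x * x ^ α * (1-x) ^ β * (x-t) ^ γ *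
        (2 * Polynomial.eval x (Polynomial.derivative (P j)) * Polynomial.eval x (P j)))
      = 2 * j * h j := by
  set q := Polynomial.C (2:ℝ) * (Polynomial.X * Polynomial.derivative (P j)) with hqdef
  have hPj := hmono j
  have hcq : ∀ i : ℕ, (P j).natDegree < i → q.coeff i = 0 := by
    intro i hi
    match i, hi with
    | (i+1), hi =>
      have : (P j).coeff (i+1) = 0 := Polynomial.coeff_eq_zero_of_natDegree_lt hi
      simp [hqdef, Polynomial.coeff_C_mul, Polynomial.coeff_X_mul,
        Polynomial.coeff_derivative, this]
  have hdeg : q.degree < ((j:ℕ)+1 : ℕ) := by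
    rw [Polynomial.degree_lt_iff_coeff_zero]
    intro i hi
    exact hcq i (by rw [hPj.2]; omega)
  have hcoeff : q.coeff j = 2 * j := by
    match j with
    | 0 =>
      simp [hqdef, Polynomial.mul_coeff_zero]
    | (m+1) =>
      have h1 : (P (m+1)).coeff (m+1) = 1 := by
        have := hPj.1.coeff_natDegree
        rwa [hPj.2] at this
      simp [hqdef, Polynomial.coeff_C_mul, Polynomial.coeff_X_mul,
        Polynomial.coeff_derivative, h1]
  have hcongr : ∀ x ∈ Set.uIcc (0:ℝ) 1,
      x * x ^ α * (1-x) ^ β * (x-t) ^ γ *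
          (2 * Polynomial.eval x (Polynomial.derivative (P j)) * Polynomial.eval x (P j))
        = Polynomial.eval x q * Polynomial.eval x (P j) * genJacobiWeight α β γ t x := by
    intro x _
    unfold genJacobiWeight
    simp only [hqdef, Polynomial.eval_mul, Polynomial.eval_C, Polynomial.eval_X]
    ring
  rw [intervalIntegral.integral_congr hcongr,
    proj_coeff ht hα hβ hmono horth j q hdeg, hcoeff]

lemma IBP (j : ℕ) :
    (1+α) * h j
      - β * (∫ x in (0:ℝ)..1,
          x * x ^ α * (1-x) ^ (β-1) * (x-t) ^ γ * (Polynomial.eval x (P j))^2)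
      + γ * (∫ x in (0:ℝ)..1,
          x * x ^ α * (1-x) ^ β * (x-t) ^ (γ-1) * (Polynomial.eval x (P j))^2)
      + 2*(j:ℝ)* h j = 0 := by
  have hderiv : ∀ x ∈ Set.Ioo (0:ℝ) 1,
      HasDerivAt (fun y : ℝ => y * y ^ α * (1-y) ^ β * (y-t) ^ γ * (Polynomial.eval y (P j))^2)
        ((1+α) * (x ^ α * (1-x) ^ β * (x-t) ^ γ * (Polynomial.eval x (P j))^2)
          - β * (x * x ^ α * (1-x) ^ (β-1) * (x-t) ^ γ * (Polynomial.eval x (P j))^2)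
          + γ * (x * x ^ α * (1-x) ^ β * (x-t) ^ (γ-1) * (Polynomial.eval x (P j))^2)
          + x * x ^ α * (1-x) ^ β * (x-t) ^ γ *
              (2 * Polynomial.eval x (Polynomial.derivative (P j)) * Polynomial.eval x (P j))) x := by
    intro x hx
    obtain ⟨hx0, hx1⟩ := hx
    have hxt : x - t ≠ 0 := by intro hc; nlinarith [sub_eq_zero.mp hc]
    have h1x : (1:ℝ) - x ≠ 0 := by intro hc; nlinarith [sub_eq_zero.mp hc]
    have d1 : HasDerivAt (fun y : ℝ => y * y ^ α) (1 * x ^ α + x * (α * x ^ (α-1))) x :=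
      (hasDerivAt_id x).mul (Real.hasDerivAt_rpow_const (Or.inl hx0.ne'))
    have d2 : HasDerivAt (fun y : ℝ => (1-y) ^ β) (-1 * β * (1-x) ^ (β-1)) x :=
      HasDerivAt.rpow_const ((hasDerivAt_id x).const_sub 1) (Or.inl h1x)
    have d3 : HasDerivAt (fun y : ℝ => (y-t) ^ γ) (1 * γ * (x-t) ^ (γ-1)) x :=
      HasDerivAt.rpow_const ((hasDerivAt_id x).sub_const t) (Or.inl hxt)
    have d4 : HasDerivAt (fun y : ℝ => (Polynomial.eval y (P j))^2)
        ((2:ℕ) * (Polynomial.eval x (P j)) ^ (2-1) * Polynomial.eval x (Polynomial.derivative (P j))) x :=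
      (Polynomial.hasDerivAt (P j) x).pow 2
    have hD := ((d1.mul d2).mul d3).mul d4
    have hxa : x ^ α = x ^ (α-1) * x := by
      have := Real.rpow_add_one hx0.ne' (α-1)
      rwa [sub_add_cancel] at this
    refine hD.congr_deriv ?_
    simp only [Pi.mul_apply]
    rw [hxa]
    push_cast
    ring
  have hcont : ContinuousOn
      (fun y : ℝ => y * y ^ α * (1-y) ^ β * (y-t) ^ γ * (Polynomial.eval y (P j))^2)
      (Set.Icc 0 1) :=
    ((((continuousOn_id.mul (contOn_rpow_pos hα.le)).mul (contOn_one_sub_rpow hβ.le)).mul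
      (contOn_shift ht γ)).mul (((P j).continuous.pow 2).continuousOn))
  have i1 : IntervalIntegrable
      (fun x : ℝ => (1+α) * (x ^ α * (1-x) ^ β * (x-t) ^ γ * (Polynomial.eval x (P j))^2))
      volume 0 1 :=
    II_of_contOn (continuousOn_const.mul ((((contOn_rpow_pos hα.le).mul
      (contOn_one_sub_rpow hβ.le)).mul (contOn_shift ht γ)).mul
      (((P j).continuous.pow 2).continuousOn)))
  have i2 : IntervalIntegrable
      (fun x : ℝ => β * (x * x ^ α * (1-x) ^ (β-1) * (x-t) ^ γ * (Polynomial.eval x (P j))^2))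
      volume 0 1 := by
    have hg : ContinuousOn
        (fun x : ℝ => β * (x * x ^ α * (x-t) ^ γ * (Polynomial.eval x (P j))^2))
        (Set.Icc 0 1) :=
      continuousOn_const.mul (((continuousOn_id.mul (contOn_rpow_pos hα.le)).mul
        (contOn_shift ht γ)).mul (((P j).continuous.pow 2).continuousOn))
    exact II_congr (fun x => by ring) (II_sing (by linarith) hg)
  have i3 : IntervalIntegrable
      (fun x : ℝ => γ * (x * x ^ α * (1-x) ^ β * (x-t) ^ (γ-1) * (Polynomial.eval x (P j))^2))
      volume 0 1 :=
    II_of_contOn (continuousOn_const.mul ((((continuousOn_id.mul (contOn_rpow_pos hα.le)).mul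
      (contOn_one_sub_rpow hβ.le)).mul (contOn_shift ht (γ-1))).mul
      (((P j).continuous.pow 2).continuousOn)))
  have i4 : IntervalIntegrable
      (fun x : ℝ => x * x ^ α * (1-x) ^ β * (x-t) ^ γ *
        (2 * Polynomial.eval x (Polynomial.derivative (P j)) * Polynomial.eval x (P j)))
      volume 0 1 :=
    II_of_contOn ((((continuousOn_id.mul (contOn_rpow_pos hα.le)).mul
      (contOn_one_sub_rpow hβ.le)).mul (contOn_shift ht γ)).mul
      ((continuous_const.mul ((Polynomial.derivative (P j)).continuous)).mul
        ((P j).continuous)).continuousOn)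
  have hFTC := intervalIntegral.integral_eq_sub_of_hasDeriv_right_of_le zero_le_one hcont
    (fun x hx => (hderiv x hx).hasDerivWithinAt) (((i1.sub i2).add i3).add i4)
  rw [intervalIntegral.integral_add ((i1.sub i2).add i3) i4,
    intervalIntegral.integral_add (i1.sub i2) i3,
    intervalIntegral.integral_sub i1 i2,
    intervalIntegral.integral_const_mul, intervalIntegral.integral_const_mul,
    intervalIntegral.integral_const_mul,
    integral_sq_w ht hα hβ hmono horth j,
    sum_xPP' ht hα hβ hmono horth j] at hFTC
  norm_num [Real.zero_rpow hβ.ne'] at hFTC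
  linarith [hFTC]

lemma A_eq (j : ℕ) (hpos : 0 < h j)
    (Rj : ℝ)
    (hRj : Rj = β / h j * ∫ y in (0:ℝ)..1,
      (Polynomial.eval y (P j)) ^ 2 * genJacobiWeight α β γ t y / (1 - y)) :
    β * (∫ x in (0:ℝ)..1,
        x * x ^ α * (1-x) ^ (β-1) * (x-t) ^ γ * (Polynomial.eval x (P j))^2)
      = Rj * h j - β * h j := by
  have iA1 : IntervalIntegrable
      (fun x : ℝ => x ^ α * (1-x) ^ (β-1) * (x-t) ^ γ * (Polynomial.eval x (P j))^2)
      volume 0 1 := by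
    have hg : ContinuousOn
        (fun x : ℝ => x ^ α * (x-t) ^ γ * (Polynomial.eval x (P j))^2) (Set.Icc 0 1) :=
      ((contOn_rpow_pos hα.le).mul (contOn_shift ht γ)).mul
        (((P j).continuous.pow 2).continuousOn)
    exact II_congr (fun x => by ring) (II_sing (by linarith) hg)
  have iW : IntervalIntegrable
      (fun x : ℝ => x ^ α * (1-x) ^ β * (x-t) ^ γ * (Polynomial.eval x (P j))^2)
      volume 0 1 :=
    II_of_contOn ((((contOn_rpow_pos hα.le).mul (contOn_one_sub_rpow hβ.le)).mul
      (contOn_shift ht γ)).mul (((P j).continuous.pow 2).continuousOn))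
  -- step (a): split off the x factor
  have hsplit : (∫ x in (0:ℝ)..1,
        x * x ^ α * (1-x) ^ (β-1) * (x-t) ^ γ * (Polynomial.eval x (P j))^2)
      = (∫ x in (0:ℝ)..1, x ^ α * (1-x) ^ (β-1) * (x-t) ^ γ * (Polynomial.eval x (P j))^2)
        - h j := by
    have hcongr : ∀ x ∈ Set.uIcc (0:ℝ) 1,
        x * x ^ α * (1-x) ^ (β-1) * (x-t) ^ γ * (Polynomial.eval x (P j))^2
          = x ^ α * (1-x) ^ (β-1) * (x-t) ^ γ * (Polynomial.eval x (P j))^2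
            - x ^ α * (1-x) ^ β * (x-t) ^ γ * (Polynomial.eval x (P j))^2 := by
      intro x _
      rw [one_sub_split β hβ x]
      ring
    rw [intervalIntegral.integral_congr hcongr, intervalIntegral.integral_sub iA1 iW,
      integral_sq_w ht hα hβ hmono horth j]
  -- step (b): identify with the R-integral
  have hA1 : (∫ x in (0:ℝ)..1, x ^ α * (1-x) ^ (β-1) * (x-t) ^ γ * (Polynomial.eval x (P j))^2)
      = ∫ y in (0:ℝ)..1,
          (Polynomial.eval y (P j)) ^ 2 * genJacobiWeight α β γ t y / (1 - y) := by
    rw [intervalIntegral.integral_of_le zero_le_one, intervalIntegral.integral_of_le zero_le_one]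
    apply MeasureTheory.integral_congr_ae
    refine (MeasureTheory.ae_restrict_iff' measurableSet_Ioc).2 ?_
    have hsub : {x : ℝ | ¬ (x ∈ Set.Ioc (0:ℝ) 1 →
        x ^ α * (1-x) ^ (β-1) * (x-t) ^ γ * (Polynomial.eval x (P j))^2
          = (Polynomial.eval x (P j)) ^ 2 * genJacobiWeight α β γ t x / (1 - x))} ⊆ {1} := by
      intro x hx
      simp only [Set.mem_setOf_eq, Classical.not_imp] at hx
      obtain ⟨hmem, hne⟩ := hx
      by_contra hx1
      apply hne
      have h1x : (1:ℝ) - x ≠ 0 := sub_ne_zero.mpr (fun hc => hx1 hc.symm)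
      unfold genJacobiWeight
      rw [one_sub_split β hβ x]
      field_simp
    exact MeasureTheory.ae_iff.mpr (measure_mono_null hsub (measure_singleton 1))
  have hRh : Rj * h j = β * ∫ y in (0:ℝ)..1,
      (Polynomial.eval y (P j)) ^ 2 * genJacobiWeight α β γ t y / (1 - y) := by
    rw [hRj]
    field_simp
  rw [hsplit, hA1]
  rw [mul_sub, hRh]

lemma gammaB (j : ℕ) (hpos : 0 < h j)
    (Rj : ℝ)
    (hRj : Rj = β / h j * ∫ y in (0:ℝ)..1,
      (Polynomial.eval y (P j)) ^ 2 * genJacobiWeight α β γ t y / (1 - y)) :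
    γ * (∫ x in (0:ℝ)..1,
        x * x ^ α * (1-x) ^ β * (x-t) ^ (γ-1) * (Polynomial.eval x (P j))^2)
      = (Rj - β - α - 1 - 2*(j:ℝ)) * h j := by
  have h1 := IBP ht hα hβ hmono horth j
  have h2 := A_eq ht hα hβ hmono horth j hpos Rj hRj
  linarith [h1, h2]

lemma t_dEntry (j : ℕ) (hpos : 0 < h j) (Rj : ℝ)
    (hRj : Rj = β / h j * ∫ y in (0:ℝ)..1,
      (Polynomial.eval y (P j)) ^ 2 * genJacobiWeight α β γ t y / (1 - y)) :
    t * (∫ x in (0:ℝ)..1, Polynomial.eval x (P j) * Polynomial.eval x (P j) *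
        (-γ * ((x - t) ^ (γ-1) * x ^ α * (1-x) ^ β)))
      = (γ + β + α + 1 + 2*(j:ℝ) - Rj) * h j := by
  have iT1 : IntervalIntegrable
      (fun x : ℝ => γ * (x ^ α * (1-x) ^ β * (x-t) ^ γ * (Polynomial.eval x (P j))^2))
      volume 0 1 :=
    II_of_contOn (continuousOn_const.mul ((((contOn_rpow_pos hα.le).mul
      (contOn_one_sub_rpow hβ.le)).mul (contOn_shift ht γ)).mul
      (((P j).continuous.pow 2).continuousOn)))
  have iT3 : IntervalIntegrable
      (fun x : ℝ => γ * (x * x ^ α * (1-x) ^ β * (x-t) ^ (γ-1) * (Polynomial.eval x (P j))^2))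
      volume 0 1 :=
    II_of_contOn (continuousOn_const.mul ((((continuousOn_id.mul (contOn_rpow_pos hα.le)).mul
      (contOn_one_sub_rpow hβ.le)).mul (contOn_shift ht (γ-1))).mul
      (((P j).continuous.pow 2).continuousOn)))
  have hpt : ∀ x ∈ Set.uIcc (0:ℝ) 1,
      t * (Polynomial.eval x (P j) * Polynomial.eval x (P j) *
          (-γ * ((x - t) ^ (γ-1) * x ^ α * (1-x) ^ β)))
        = γ * (x ^ α * (1-x) ^ β * (x-t) ^ γ * (Polynomial.eval x (P j))^2)
          - γ * (x * x ^ α * (1-x) ^ β * (x-t) ^ (γ-1) * (Polynomial.eval x (P j))^2) := by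
    intro x hx
    rw [uIcc01] at hx
    have hne : x - t ≠ 0 := by intro hc; nlinarith [sub_eq_zero.mp hc, hx.1]
    have hsp : (x-t) ^ γ = (x-t) ^ (γ-1) * (x-t) := by
      have := Real.rpow_add_one hne (γ-1)
      rwa [sub_add_cancel] at this
    rw [hsp]
    ring
  rw [← intervalIntegral.integral_const_mul, intervalIntegral.integral_congr hpt,
    intervalIntegral.integral_sub iT1 iT3,
    intervalIntegral.integral_const_mul, intervalIntegral.integral_const_mul,
    integral_sq_w ht hα hβ hmono horth j, ← intervalIntegral.integral_const_mul,
    intervalIntegral.integral_const_mul,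
    gammaB ht hα hβ hmono horth j hpos Rj hRj]
  ring

end Ortho

lemma rpow_le_sum {p δ B c : ℝ} (hδ : 0 < δ) (h1 : δ ≤ c) (h2 : c ≤ B) :
    c ^ p ≤ δ ^ p + B ^ p := by
  rcases le_or_gt 0 p with hp | hp
  · have hcB : c ^ p ≤ B ^ p := Real.rpow_le_rpow (by linarith) h2 hp
    have : (0:ℝ) ≤ δ ^ p := Real.rpow_nonneg hδ.le p
    linarith
  · have hcδ : c ^ p ≤ δ ^ p := Real.rpow_le_rpow_of_nonpos hδ h1 hp.le
    have : (0:ℝ) ≤ B ^ p := Real.rpow_nonneg (by linarith) p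
    linarith

lemma hasDerivAt_moment (α β γ t : ℝ) (ht : t < 0) (hα : 0 < α) (hβ : 0 < β) (m : ℕ) :
    HasDerivAt (fun s => ∫ x in (0:ℝ)..1, x ^ m * genJacobiWeight α β γ s x)
      (∫ x in (0:ℝ)..1, x ^ m * (-γ * ((x - t) ^ (γ-1) * x ^ α * (1-x) ^ β))) t := by
  have hIoc : Set.uIoc (0:ℝ) 1 = Set.Ioc 0 1 := Set.uIoc_of_le zero_le_one
  have εpos : (0:ℝ) < -t/2 := by linarith
  have key := intervalIntegral.hasDerivAt_integral_of_dominated_loc_of_deriv_le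
    (μ := volume) (a := (0:ℝ)) (b := 1) (x₀ := t)
    (F := fun s x => x ^ m * genJacobiWeight α β γ s x)
    (F' := fun s x => x ^ m * (-γ * ((x - s) ^ (γ-1) * x ^ α * (1-x) ^ β)))
    (bound := fun _ => |γ| * ((-t/2) ^ (γ-1) + (1-2*t) ^ (γ-1)))
    (Metric.ball_mem_nhds t εpos) ?_ ?_ ?_ ?_ ?_ ?_
  · exact key.2
  · -- measurability of F s for s near t
    filter_upwards [Iio_mem_nhds ht] with s hs
    rw [hIoc]
    exact (((continuous_pow m).continuousOn.mul (contOn_w hs hα hβ)).mono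
      Set.Ioc_subset_Icc_self).aestronglyMeasurable measurableSet_Ioc
  · exact II_of_contOn ((continuous_pow m).continuousOn.mul (contOn_w ht hα hβ))
  · rw [hIoc]
    have hc : ContinuousOn (fun x : ℝ => x ^ m * (-γ * ((x - t) ^ (γ-1) * x ^ α * (1-x) ^ β)))
        (Set.Icc 0 1) :=
      (continuous_pow m).continuousOn.mul (continuousOn_const.mul
        (((contOn_shift ht (γ-1)).mul (contOn_rpow_pos hα.le)).mul (contOn_one_sub_rpow hβ.le)))
    exact (hc.mono Set.Ioc_subset_Icc_self).aestronglyMeasurable measurableSet_Ioc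
  · -- bound
    refine Filter.Eventually.of_forall ?_
    intro x hx s hs
    rw [hIoc] at hx
    obtain ⟨hx0, hx1⟩ := hx
    rw [Metric.mem_ball, Real.dist_eq, abs_lt] at hs
    have hxs0 : -t/2 ≤ x - s := by linarith
    have hxsB : x - s ≤ 1 - 2*t := by linarith
    have h1 : x ^ m ≤ 1 := pow_le_one₀ hx0.le hx1
    have h2 : x ^ α ≤ 1 := Real.rpow_le_one hx0.le hx1 hα.le
    have h3 : (1-x) ^ β ≤ 1 := Real.rpow_le_one (by linarith) (by linarith) hβ.le
    have h4 : (x - s) ^ (γ-1) ≤ (-t/2) ^ (γ-1) + (1-2*t) ^ (γ-1) :=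
      rpow_le_sum εpos hxs0 hxsB
    have hnn2 : (0:ℝ) ≤ x ^ α := Real.rpow_nonneg hx0.le α
    have hnn3 : (0:ℝ) ≤ (1-x) ^ β := Real.rpow_nonneg (by linarith) β
    have hnn4 : (0:ℝ) ≤ (x - s) ^ (γ-1) := Real.rpow_nonneg (by linarith) _
    have hnn1 : (0:ℝ) ≤ x ^ m := pow_nonneg hx0.le m
    have heq : ‖x ^ m * (-γ * ((x - s) ^ (γ-1) * x ^ α * (1-x) ^ β))‖
        = |γ| * ((x - s) ^ (γ-1) * (x ^ m * (x ^ α * (1-x) ^ β))) := by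
      rw [Real.norm_eq_abs, abs_mul, abs_mul, abs_neg, abs_of_nonneg hnn1,
        abs_of_nonneg (mul_nonneg (mul_nonneg hnn4 hnn2) hnn3)]
      ring
    rw [heq]
    have hin : x ^ α * (1-x) ^ β ≤ 1 := by nlinarith
    have hprod : x ^ m * (x ^ α * (1-x) ^ β) ≤ 1 := by
      nlinarith [mul_le_mul_of_nonneg_right h1 (mul_nonneg hnn2 hnn3)]
    have hbnd : (x - s) ^ (γ-1) * (x ^ m * (x ^ α * (1-x) ^ β)) ≤
        ((-t/2) ^ (γ-1) + (1-2*t) ^ (γ-1)) := by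
      calc (x - s) ^ (γ-1) * (x ^ m * (x ^ α * (1-x) ^ β)) ≤ (x - s) ^ (γ-1) * 1 :=
            mul_le_mul_of_nonneg_left hprod hnn4
        _ = (x - s) ^ (γ-1) := mul_one _
        _ ≤ _ := h4
    exact mul_le_mul_of_nonneg_left hbnd (abs_nonneg γ)
  · exact intervalIntegrable_const
  · -- differentiability in s
    refine Filter.Eventually.of_forall ?_
    intro x hx s hs
    rw [hIoc] at hx
    obtain ⟨hx0, hx1⟩ := hx
    rw [Metric.mem_ball, Real.dist_eq, abs_lt] at hs
    have hxs : x - s ≠ 0 := by intro hc; nlinarith [sub_eq_zero.mp hc]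
    have d0 : HasDerivAt (fun s : ℝ => (x - s) ^ γ) (-1 * γ * (x - s) ^ (γ-1)) s :=
      HasDerivAt.rpow_const ((hasDerivAt_id s).const_sub x) (Or.inl hxs)
    have d1 := ((d0.mul_const (x ^ α)).mul_const ((1-x) ^ β)).const_mul (x ^ m)
    have : (fun s : ℝ => x ^ m * genJacobiWeight α β γ s x)
        = fun s : ℝ => x ^ m * ((x - s) ^ γ * x ^ α * (1-x) ^ β) := rfl
    rw [this]
    refine d1.congr_deriv (Eq.symm ?_)
    ring

section Det

variable {n : ℕ} {P : ℕ → Polynomial ℝ}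
  (hmono : ∀ m, (P m).Monic ∧ (P m).natDegree = m)

/-- change of basis matrix -/
noncomputable def U (P : ℕ → Polynomial ℝ) (n : ℕ) : Matrix (Fin n) (Fin n) ℝ :=
  Matrix.of fun i k : Fin n => (P (k : ℕ)).coeff (i : ℕ)

include hmono

lemma detU : (U P n).det = 1 := by
  have htri : (U P n).BlockTriangular id := by
    intro i k hik
    simp only [U, Matrix.of_apply]
    exact Polynomial.coeff_eq_zero_of_natDegree_lt (by rw [(hmono (k:ℕ)).2]; exact hik)
  rw [Matrix.det_of_upperTriangular htri]
  apply Finset.prod_eq_one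
  intro i _
  simp only [U, Matrix.of_apply]
  have := (hmono (i:ℕ)).1.coeff_natDegree
  rwa [(hmono (i:ℕ)).2] at this

lemma conj_entry (f : ℝ → ℝ) (hf : IntervalIntegrable f volume 0 1) (j k : Fin n) :
    ((U P n)ᵀ * (Matrix.of fun a b : Fin n =>
        ∫ x in (0:ℝ)..1, x ^ ((a : ℕ) + (b : ℕ)) * f x) * U P n) j k
      = ∫ x in (0:ℝ)..1,
          Polynomial.eval x (P (j : ℕ)) * Polynomial.eval x (P (k : ℕ)) * f x := by
  have hIf : ∀ m : ℕ, IntervalIntegrable (fun x => x ^ m * f x) volume 0 1 := fun m =>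
    hf.continuousOn_mul ((continuous_pow m).continuousOn)
  have hptwise : ∀ x : ℝ,
      Polynomial.eval x (P (j : ℕ)) * Polynomial.eval x (P (k : ℕ)) * f x
        = ∑ i ∈ Finset.range n, ∑ l ∈ Finset.range n,
            (P (j : ℕ)).coeff i * (P (k : ℕ)).coeff l * (x ^ (i + l) * f x) := by
    intro x
    rw [Polynomial.eval_eq_sum_range' (by rw [(hmono (j:ℕ)).2]; exact j.isLt) x,
      Polynomial.eval_eq_sum_range' (by rw [(hmono (k:ℕ)).2]; exact k.isLt) x,
      Finset.sum_mul_sum, Finset.sum_mul]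
    refine Finset.sum_congr rfl fun i _ => ?_
    rw [Finset.sum_mul]
    refine Finset.sum_congr rfl fun l _ => ?_
    rw [pow_add]
    ring
  have hIsum : ∀ i ∈ Finset.range n, IntervalIntegrable
      (fun x => ∑ l ∈ Finset.range n,
        (P (j : ℕ)).coeff i * (P (k : ℕ)).coeff l * (x ^ (i + l) * f x)) volume 0 1 := by
    intro i _
    have hs := IntervalIntegrable.sum (μ := volume) (a := (0:ℝ)) (b := 1) (Finset.range n)
      (f := fun l => fun x : ℝ =>
        (P (j : ℕ)).coeff i * (P (k : ℕ)).coeff l * (x ^ (i + l) * f x))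
      (fun l _ => ((hIf (i+l)).const_mul _))
    exact II_congr (fun x => by simp) hs
  rw [intervalIntegral.integral_congr (fun x _ => hptwise x),
    intervalIntegral.integral_finset_sum hIsum]
  have hinner : ∀ i ∈ Finset.range n,
      (∫ x in (0:ℝ)..1, ∑ l ∈ Finset.range n,
          (P (j : ℕ)).coeff i * (P (k : ℕ)).coeff l * (x ^ (i + l) * f x))
        = ∑ l ∈ Finset.range n,
            (P (j : ℕ)).coeff i * (P (k : ℕ)).coeff l * ∫ x in (0:ℝ)..1, x ^ (i + l) * f x := by
    intro i _
    rw [intervalIntegral.integral_finset_sum (fun l _ => ((hIf (i+l)).const_mul _))]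
    exact Finset.sum_congr rfl fun l _ => intervalIntegral.integral_const_mul _ _
  have houter : (∑ i ∈ Finset.range n,
      ∫ x in (0:ℝ)..1, ∑ l ∈ Finset.range n,
        (P (j : ℕ)).coeff i * (P (k : ℕ)).coeff l * (x ^ (i + l) * f x))
    = ∑ i ∈ Finset.range n, ∑ l ∈ Finset.range n,
        (P (j : ℕ)).coeff i * (P (k : ℕ)).coeff l * ∫ x in (0:ℝ)..1, x ^ (i + l) * f x :=
    Finset.sum_congr rfl hinner
  rw [houter]
  -- now compute the matrix side
  set T : ℕ → ℕ → ℝ := fun i l =>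
    (P (j : ℕ)).coeff i * (P (k : ℕ)).coeff l * ∫ x in (0:ℝ)..1, x ^ (i + l) * f x with hT
  have hmat : ((U P n)ᵀ * (Matrix.of fun a b : Fin n =>
      ∫ x in (0:ℝ)..1, x ^ ((a : ℕ) + (b : ℕ)) * f x) * U P n) j k
      = ∑ l : Fin n, ∑ i : Fin n, T (i : ℕ) (l : ℕ) := by
    rw [Matrix.mul_apply]
    refine Finset.sum_congr rfl fun l _ => ?_
    rw [Matrix.mul_apply, Finset.sum_mul]
    refine Finset.sum_congr rfl fun i _ => ?_
    simp only [Matrix.transpose_apply, U, Matrix.of_apply, hT]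
    ring
  have hswap : (∑ l : Fin n, ∑ i : Fin n, T (i : ℕ) (l : ℕ))
      = ∑ i : Fin n, ∑ l : Fin n, T (i : ℕ) (l : ℕ) := Finset.sum_comm
  have hfin : (∑ i : Fin n, ∑ l : Fin n, T (i : ℕ) (l : ℕ))
      = ∑ i ∈ Finset.range n, ∑ l ∈ Finset.range n, T i l := by
    rw [← Fin.sum_univ_eq_sum_range (fun i => ∑ l ∈ Finset.range n, T i l) n]
    exact Finset.sum_congr rfl fun i _ => Fin.sum_univ_eq_sum_range (fun l => T (i : ℕ) l) n
  rw [hmat, hswap, hfin]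

omit hmono in
lemma perm_exists_ne {n : ℕ} (σ : Equiv.Perm (Fin n)) (hσ : σ ≠ 1) (i : Fin n) :
    ∃ k, k ≠ i ∧ σ k ≠ k := by
  obtain ⟨a, ha⟩ : ∃ a, σ a ≠ a := by
    by_contra hc
    push_neg at hc
    exact hσ (Equiv.ext fun x => (hc x).trans (Equiv.Perm.one_apply x).symm)
  by_cases hai : a = i
  · subst hai
    refine ⟨σ a, ha, fun hc => ha (σ.injective hc)⟩
  · exact ⟨a, hai, ha⟩

lemma hankel_deriv (α β γ t : ℝ) (ht : t < 0) (hα : 0 < α) (hβ : 0 < β) {h : ℕ → ℝ}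
    (horth : ∀ m k, (∫ x in (0:ℝ)..1,
        (P m).eval x * (P k).eval x * genJacobiWeight α β γ t x) = if m = k then h k else 0) :
    (HasDerivAt (fun s => hankelDet α β γ n s)
      (∑ j : Fin n, (∫ x in (0:ℝ)..1,
          Polynomial.eval x (P (j:ℕ)) * Polynomial.eval x (P (j:ℕ)) *
            (-γ * ((x - t) ^ (γ-1) * x ^ α * (1-x) ^ β)))
        * ∏ k ∈ Finset.univ.erase j, h (k:ℕ)) t)
    ∧ hankelDet α β γ n t = ∏ k : Fin n, h (k:ℕ) := by
  classical
  set ψ : ℝ → ℝ := fun x => -γ * ((x - t) ^ (γ-1) * x ^ α * (1-x) ^ β) with hψ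
  have hψint : IntervalIntegrable ψ volume 0 1 :=
    II_of_contOn (continuousOn_const.mul (((contOn_shift ht (γ-1)).mul
      (contOn_rpow_pos hα.le)).mul (contOn_one_sub_rpow hβ.le)))
  set A : ℝ → Matrix (Fin n) (Fin n) ℝ := fun s => Matrix.of fun a b : Fin n =>
    ∫ x in (0:ℝ)..1, x ^ ((a : ℕ) + (b : ℕ)) * genJacobiWeight α β γ s x with hA
  set A' : Matrix (Fin n) (Fin n) ℝ := Matrix.of fun a b : Fin n =>
    ∫ x in (0:ℝ)..1, x ^ ((a : ℕ) + (b : ℕ)) * ψ x with hA'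
  set V := U P n with hV
  -- the Hankel determinant equals det of the conjugated matrix
  have hdetGs : ∀ s, hankelDet α β γ n s = (Vᵀ * A s * V).det := by
    intro s
    rw [Matrix.det_mul, Matrix.det_mul, Matrix.det_transpose, detU hmono]
    simp [hankelDet, hA]
  -- value of G at t : diagonal
  have hGt : Vᵀ * A t * V = Matrix.diagonal (fun j : Fin n => h (j:ℕ)) := by
    ext j k
    rw [hV, hA]
    rw [conj_entry hmono (fun x => genJacobiWeight α β γ t x)
      (II_of_contOn (contOn_w ht hα hβ)) j k]
    rw [horth (j:ℕ) (k:ℕ), Matrix.diagonal_apply]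
    by_cases hjk : j = k
    · simp [hjk]
    · have : (j:ℕ) ≠ (k:ℕ) := fun hc => hjk (Fin.ext hc)
      simp [hjk, this]
  -- derivative of each entry
  have dEnt : ∀ j k : Fin n, HasDerivAt (fun s => (Vᵀ * A s * V) j k)
      ((Vᵀ * A' * V) j k) t := by
    intro j k
    have hfun : (fun s => (Vᵀ * A s * V) j k)
        = fun s => ∑ l : Fin n, (∑ i : Fin n,
            (P ((j:Fin n):ℕ)).coeff (i:ℕ) *
              (∫ x in (0:ℝ)..1, x ^ ((i : ℕ) + (l : ℕ)) * genJacobiWeight α β γ s x))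
            * (P ((k:Fin n):ℕ)).coeff (l:ℕ) := by
      funext s
      rw [Matrix.mul_apply]
      refine Finset.sum_congr rfl fun l _ => ?_
      rw [Matrix.mul_apply]
      simp [hV, U, hA, Matrix.transpose_apply]
    have hval : (Vᵀ * A' * V) j k
        = ∑ l : Fin n, (∑ i : Fin n,
            (P ((j:Fin n):ℕ)).coeff (i:ℕ) *
              (∫ x in (0:ℝ)..1, x ^ ((i : ℕ) + (l : ℕ)) * ψ x))
            * (P ((k:Fin n):ℕ)).coeff (l:ℕ) := by
      rw [Matrix.mul_apply]
      refine Finset.sum_congr rfl fun l _ => ?_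
      rw [Matrix.mul_apply]
      simp [hV, U, hA', Matrix.transpose_apply]
    rw [hfun, hval]
    apply HasDerivAt.fun_sum
    intro l _
    apply HasDerivAt.mul_const
    apply HasDerivAt.fun_sum
    intro i _
    exact (hasDerivAt_moment α β γ t ht hα hβ ((i:ℕ)+(l:ℕ))).const_mul _
  -- derivative of the determinant
  have hdet : HasDerivAt (fun s => (Vᵀ * A s * V).det)
      (∑ j : Fin n, ((Vᵀ * A' * V) j j) * ∏ k ∈ Finset.univ.erase j, h (k:ℕ)) t := by
    have hexp : (fun s => (Vᵀ * A s * V).det)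
        = fun s => ∑ σ : Equiv.Perm (Fin n),
            ((Equiv.Perm.sign σ : ℤ) : ℝ) * ∏ i : Fin n, (Vᵀ * A s * V) (σ i) i := by
      funext s
      exact Matrix.det_apply' _
    rw [hexp]
    have hD := HasDerivAt.fun_sum (u := Finset.univ)
      (A := fun (σ : Equiv.Perm (Fin n)) s =>
        ((Equiv.Perm.sign σ : ℤ) : ℝ) * ∏ i : Fin n, (Vᵀ * A s * V) (σ i) i)
      (A' := fun (σ : Equiv.Perm (Fin n)) =>
        ((Equiv.Perm.sign σ : ℤ) : ℝ) * ∑ i : Fin n,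
          (∏ k ∈ Finset.univ.erase i, (Vᵀ * A t * V) (σ k) k) • ((Vᵀ * A' * V) (σ i) i))
      (x := t) ?_
    · refine hD.congr_deriv (Eq.symm ?_)
      rw [Finset.sum_eq_single (1 : Equiv.Perm (Fin n))]
      · simp only [Equiv.Perm.sign_one, Units.val_one, Int.cast_one, one_mul,
          Equiv.Perm.one_apply, smul_eq_mul]
        refine Finset.sum_congr rfl fun i _ => ?_
        rw [mul_comm]
        congr 1
        refine Finset.prod_congr rfl fun k _ => ?_
        rw [hGt, Matrix.diagonal_apply_eq]
      · intro σ _ hσ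
        have hz : ∀ i : Fin n,
            (∏ k ∈ Finset.univ.erase i, (Vᵀ * A t * V) (σ k) k) • ((Vᵀ * A' * V) (σ i) i)
              = 0 := by
          intro i
          obtain ⟨k, hki, hσk⟩ := perm_exists_ne σ hσ i
          have hzero : (Vᵀ * A t * V) (σ k) k = 0 := by
            rw [hGt]
            exact Matrix.diagonal_apply_ne _ hσk
          have hp : (∏ m ∈ Finset.univ.erase i, (Vᵀ * A t * V) (σ m) m) = 0 :=
            Finset.prod_eq_zero (Finset.mem_erase.mpr ⟨hki, Finset.mem_univ k⟩) hzero
          rw [hp]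
          simp
        rw [Finset.sum_congr rfl (fun i _ => hz i)]
        simp
      · intro hmem
        exact absurd (Finset.mem_univ _) hmem
    · intro σ _
      exact ((HasDerivAt.fun_finsetProd (fun i _ => dEnt (σ i) i)).const_mul _)
  constructor
  · have : (fun s => hankelDet α β γ n s) = fun s => (Vᵀ * A s * V).det :=
      funext fun s => hdetGs s
    rw [this]
    convert hdet using 1
    refine Finset.sum_congr rfl fun j _ => ?_
    congr 1
    rw [hV, hA']
    exact (conj_entry hmono ψ hψint j j).symm
  · rw [hdetGs t, hGt, Matrix.det_diagonal]

end Det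
end S16

theorem statement16
    (α β γ : ℝ) (hα : 0 < α) (hβ : 0 < β)
    (P : ℝ → ℕ → Polynomial ℝ) (h : ℝ → ℕ → ℝ)
    (hmonic : ∀ t < (0:ℝ), ∀ n, (P t n).Monic ∧ (P t n).natDegree = n)
    (hpos : ∀ t < (0:ℝ), ∀ n, 0 < h t n)
    (horth : ∀ t < (0:ℝ), ∀ m n, (∫ x in (0:ℝ)..1,
        (P t m).eval x * (P t n).eval x * genJacobiWeight α β γ t x)
      = if m = n then h t n else 0)
    (R : ℝ → ℕ → ℝ)
    (hR : ∀ t < (0:ℝ), ∀ n, R t n = β / h t n *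
      ∫ y in (0:ℝ)..1, ((P t n).eval y) ^ 2 * genJacobiWeight α β γ t y / (1 - y))
    :
    ∀ n : ℕ, 1 ≤ n → ∀ t < (0:ℝ),
      t * deriv (fun s => Real.log (hankelDet α β γ n s)) t
        = n * (n + α + β + γ) - ∑ j ∈ Finset.range n, R t j := by
  intro n hn t ht
  have hmono' := hmonic t ht
  have horth' := horth t ht
  obtain ⟨hD, hval⟩ := S16.hankel_deriv (n := n) (P := P t) hmono' α β γ t ht hα hβ horth'
  have hDtpos : 0 < ∏ k : Fin n, h t (k:ℕ) := Finset.prod_pos fun k _ => hpos t ht _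
  have hDne : hankelDet α β γ n t ≠ 0 := by rw [hval]; exact hDtpos.ne'
  have hlog := hD.log hDne
  rw [hlog.deriv, hval]
  have key : ∀ j : Fin n,
      t * ((∫ x in (0:ℝ)..1, Polynomial.eval x (P t (j:ℕ)) * Polynomial.eval x (P t (j:ℕ)) *
          (-γ * ((x - t) ^ (γ-1) * x ^ α * (1-x) ^ β)))
        * ∏ k ∈ Finset.univ.erase j, h t (k:ℕ)) / (∏ k : Fin n, h t (k:ℕ))
        = γ + β + α + 1 + 2*((j:ℕ):ℝ) - R t (j:ℕ) := by
    intro j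
    have h1 : h t (j:ℕ) * ∏ k ∈ Finset.univ.erase j, h t (k:ℕ) = ∏ k : Fin n, h t (k:ℕ) :=
      Finset.mul_prod_erase Finset.univ (fun k : Fin n => h t (k:ℕ)) (Finset.mem_univ j)
    have h2 := S16.t_dEntry ht hα hβ hmono' horth' (j:ℕ) (hpos t ht _) (R t (j:ℕ))
      (hR t ht (j:ℕ))
    have hstep : t * ((∫ x in (0:ℝ)..1,
          Polynomial.eval x (P t (j:ℕ)) * Polynomial.eval x (P t (j:ℕ)) *
          (-γ * ((x - t) ^ (γ-1) * x ^ α * (1-x) ^ β)))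
        * ∏ k ∈ Finset.univ.erase j, h t (k:ℕ))
        = (γ + β + α + 1 + 2*((j:ℕ):ℝ) - R t (j:ℕ)) *
            (h t (j:ℕ) * ∏ k ∈ Finset.univ.erase j, h t (k:ℕ)) := by
      calc t * ((∫ x in (0:ℝ)..1,
            Polynomial.eval x (P t (j:ℕ)) * Polynomial.eval x (P t (j:ℕ)) *
            (-γ * ((x - t) ^ (γ-1) * x ^ α * (1-x) ^ β)))
          * ∏ k ∈ Finset.univ.erase j, h t (k:ℕ))
          = (t * (∫ x in (0:ℝ)..1,
              Polynomial.eval x (P t (j:ℕ)) * Polynomial.eval x (P t (j:ℕ)) *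
              (-γ * ((x - t) ^ (γ-1) * x ^ α * (1-x) ^ β))))
            * ∏ k ∈ Finset.univ.erase j, h t (k:ℕ) := by ring
        _ = _ := by rw [h2]; ring
    rw [hstep, h1, mul_div_assoc, div_self hDtpos.ne', mul_one]
  rw [← mul_div_assoc, Finset.mul_sum, Finset.sum_div]
  have hcongr := Finset.sum_congr rfl (fun j (_ : j ∈ (Finset.univ : Finset (Fin n))) => key j)
  rw [hcongr]
  rw [Fin.sum_univ_eq_sum_range (fun m : ℕ => γ + β + α + 1 + 2*(m:ℝ) - R t m) n]
  have hgauss : (∑ j ∈ Finset.range n, (j:ℝ)) * 2 = n * ((n:ℝ) - 1) := by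
    have h0 := Finset.sum_range_id_mul_two n
    have h1 := congrArg (fun m : ℕ => (m:ℝ)) h0
    push_cast [Nat.cast_sub hn] at h1
    exact h1
  rw [Finset.sum_sub_distrib]
  have hmain : (∑ j ∈ Finset.range n, (γ + β + α + 1 + 2*(j:ℝ)))
      = (n:ℝ) * ((n:ℝ) + α + β + γ) := by
    rw [Finset.sum_add_distrib, Finset.sum_const, Finset.card_range, nsmul_eq_mul,
      ← Finset.mul_sum]
    nlinarith [hgauss]
  rw [hmain]
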